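/- Let (n_k)_{k∈ℕ} be a strictly increasing sequence of natural numbers satisfying n_{k+1}/n_k ≥ 3 for all k. Then for any finite nonempty sets α, β, γ ⊆ ℕ: Σ_{j∈α} n_j + Σ_{j∈β} n_j = Σ_{j∈γ} n_j if and only if α ∪ β = γ and α ∩ β = ∅. -/

import Mathlib

private lemma lac_sum_lt (n : ℕ → ℕ) (hpos : ∀ k, 0 < n k)
    (hlac : ∀ k, 3 * n k ≤ n (k + 1)) :
    ∀ a, 2 * ∑ k ∈ Finset.range a, n k < n a := by
  intro a
  induction a with
  | zero => simpa using hpos 0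
  | succ a ih =>
      rw [Finset.sum_range_succ, Nat.mul_add]
      calc 2 * ∑ k ∈ Finset.range a, n k + 2 * n a < n a + 2 * n a := by omega
        _ = 3 * n a := by ring
        _ ≤ n (a + 1) := hlac a

private lemma lac_zero_coeffs (n : ℕ → ℕ) (hpos : ∀ k, 0 < n k)
    (hlac : ∀ k, 3 * n k ≤ n (k + 1)) (f : ℕ → ℤ) (hf : ∀ k, |f k| ≤ 2) :
    ∀ s : Finset ℕ, ∑ x ∈ s, f x * n x = 0 → ∀ x ∈ s, f x = 0 := by
  intro s
  induction s using Finset.induction_on_max with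
  | empty => simp
  | insert a s ha ih =>
      intro hsum
      have hnotmem : a ∉ s := fun h => lt_irrefl a (ha a h)
      rw [Finset.sum_insert hnotmem] at hsum
      have hb : |∑ x ∈ s, f x * n x| < (n a : ℤ) := by
        calc |∑ x ∈ s, f x * n x| ≤ ∑ x ∈ s, |f x * n x| := Finset.abs_sum_le_sum_abs _ _
          _ ≤ ∑ x ∈ s, 2 * (n x : ℤ) := by
              apply Finset.sum_le_sum
              intro x _
              rw [abs_mul, abs_of_nonneg (by positivity : (0:ℤ) ≤ (n x : ℤ))]
              exact mul_le_mul_of_nonneg_right (hf x) (by positivity)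
          _ = ((2 * ∑ x ∈ s, n x : ℕ) : ℤ) := by push_cast; rw [Finset.mul_sum]
          _ < (n a : ℤ) := by
              have hsub : s ⊆ Finset.range a := fun x hx => Finset.mem_range.mpr (ha x hx)
              have := lac_sum_lt n hpos hlac a
              have hle : ∑ x ∈ s, n x ≤ ∑ k ∈ Finset.range a, n k :=
                Finset.sum_le_sum_of_subset hsub
              exact_mod_cast by omega
      have hfa : f a = 0 := by
        by_contra h
        have h1 : (1:ℤ) ≤ |f a| := Int.one_le_abs h
        have : (n a : ℤ) ≤ |f a * n a| := by
          rw [abs_mul, abs_of_nonneg (by positivity : (0:ℤ) ≤ (n a : ℤ))]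
          nlinarith [hpos a]
        have heq : f a * n a = -∑ x ∈ s, f x * n x := by linarith
        rw [heq, abs_neg] at this
        linarith
      rw [hfa, zero_mul, zero_add] at hsum
      intro x hx
      rcases Finset.mem_insert.mp hx with rfl | hx
      · exact hfa
      · exact ih hsum x hx

/-- If `(n_k)` is a strictly increasing sequence of positive integers with
`n_{k+1} ≥ 3 n_k`, then for finite nonempty `α, β, γ ⊆ ℕ`,
`Σ_{α} n + Σ_{β} n = Σ_{γ} n` iff `α ∪ β = γ` and `α ∩ β = ∅`. -/
theorem lacunary_sum_injectivity (n : ℕ → ℕ) (hmono : StrictMono n)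
    (hpos : ∀ k, 0 < n k) (hlac : ∀ k, 3 * n k ≤ n (k + 1)) :
    ∀ α β γ : Finset ℕ, α.Nonempty → β.Nonempty → γ.Nonempty →
      ((∑ j ∈ α, n j) + (∑ j ∈ β, n j) = ∑ j ∈ γ, n j ↔ α ∪ β = γ ∧ Disjoint α β) := by
  intro α β γ _ _ _
  constructor
  · intro h
    set f : ℕ → ℤ := fun k =>
      (if k ∈ α then 1 else 0) + (if k ∈ β then 1 else 0) - (if k ∈ γ then 1 else 0) with hfdef
    have hf : ∀ k, |f k| ≤ 2 := by
      intro k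
      simp only [hfdef]
      split <;> split <;> split <;> norm_num
    have hsum : ∑ x ∈ α ∪ β ∪ γ, f x * n x = 0 := by
      simp only [hfdef, sub_mul, add_mul, ite_mul, one_mul, zero_mul]
      rw [Finset.sum_sub_distrib, Finset.sum_add_distrib]
      rw [Finset.sum_ite_mem, Finset.sum_ite_mem, Finset.sum_ite_mem]
      have h1 : (α ∪ β ∪ γ) ∩ α = α := Finset.inter_eq_right.mpr
        (Finset.subset_union_left.trans Finset.subset_union_left |>.trans (subset_refl _) |>.trans (le_refl _))
      have h2 : (α ∪ β ∪ γ) ∩ β = β := Finset.inter_eq_right.mpr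
        (Finset.subset_union_right.trans Finset.subset_union_left)
      have h3 : (α ∪ β ∪ γ) ∩ γ = γ := Finset.inter_eq_right.mpr Finset.subset_union_right
      rw [h1, h2, h3]
      have := congrArg (fun m : ℕ => (m : ℤ)) h
      push_cast at this ⊢
      linarith
    have hzero : ∀ k, f k = 0 := by
      intro k
      by_cases hk : k ∈ α ∪ β ∪ γ
      · exact lac_zero_coeffs n hpos hlac f hf _ hsum k hk
      · simp only [Finset.mem_union, not_or] at hk
        simp [hfdef, hk.1.1, hk.1.2, hk.2]
    constructor
    · ext k
      have := hzero k
      simp only [hfdef] at this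
      simp only [Finset.mem_union]
      split_ifs at this <;> tauto
    · rw [Finset.disjoint_left]
      intro k hkα hkβ
      have := hzero k
      simp only [hfdef, if_pos hkα, if_pos hkβ] at this
      split_ifs at this <;> omega
  · rintro ⟨rfl, hd⟩
    exact (Finset.sum_union hd).symm
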